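/- arXiv:2510.20755 — 2 statements merged into one kernel-verified Lean document; each statement's English description precedes it below -/
import Mathlib

section
/- Let D be an r-equireplicate design of order k = 2 on V = {1,…,n}, let X₁,…,Xₙ be i.i.d., and let h be a symmetric measurable kernel of 2 arguments with σ₂² < ∞. Then the variance of the incomplete U-statistic satisfies Var U_{n,D}^{(2)} = |D|⁻¹ (2(r−1)σ₁² + σ₂²), and this variance is minimal among all incomplete U-statistics of second order with the same design size: for every design D' ⊆ B₂ with |D'| = |D| one has Var U_{n,D}^{(2)} ≤ Var U_{n,D'}^{(2)}. -/
open MeasureTheory ProbabilityTheory Filter Finset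



namespace IUStat

/-- Degree of an index `v` in a design `D`: number of blocks containing `v`. -/
def degree (D : Finset (Finset ℕ)) (v : ℕ) : ℕ := (D.filter (fun S => v ∈ S)).card

/-- Maximum degree of the hypergraph of a design on `V = {1,…,n}`. -/
def maxDegree (n : ℕ) (D : Finset (Finset ℕ)) : ℕ := (Finset.Icc 1 n).sup (degree D)

/-- Degree of a block `S` in the line graph `L(D)` (counting `S` itself). -/
def lineDegree (D : Finset (Finset ℕ)) (S : Finset ℕ) : ℕ :=
  (D.filter (fun S' => (S ∩ S').Nonempty)).card

/-- Maximum degree of the line graph of a design. -/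
def maxLineDegree (D : Finset (Finset ℕ)) : ℕ := D.sup (lineDegree D)

/-- The random variable `h(S)` obtained by applying the symmetric kernel `h` to the
sample values indexed by the (sorted) elements of the block `S`.  Since `h` is
symmetric in its arguments, the choice of the increasing enumeration is immaterial. -/
noncomputable def blockRV {Ω T : Type*} [MeasurableSpace T] {k : ℕ}
    (X : ℕ → Ω → T) (h : (Fin k → T) → ℝ) (S : Finset ℕ) : Ω → ℝ :=
  fun ω => h (fun j => X ((S.sort (· ≤ ·)).getD (j : ℕ) 0) ω)

/-- The incomplete U-statistic of design `D`. -/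
noncomputable def ustat {Ω T : Type*} [MeasurableSpace T] {k : ℕ}
    (D : Finset (Finset ℕ)) (X : ℕ → Ω → T) (h : (Fin k → T) → ℝ) : Ω → ℝ :=
  fun ω => (D.card : ℝ)⁻¹ * ∑ S ∈ D, blockRV X h S ω

/-- Covariance of two real random variables. -/
noncomputable def covRV {Ω : Type*} [MeasurableSpace Ω] (P : Measure Ω) (f g : Ω → ℝ) : ℝ :=
  ∫ ω, (f ω - ∫ x, f x ∂P) * (g ω - ∫ x, g x ∂P) ∂P

/-- Standard normal CDF. -/
noncomputable def Φ : ℝ → ℝ := fun z => ProbabilityTheory.cdf (gaussianReal 0 1) z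

/-- `a mod m` with a remainder of zero relabeled as `m`. -/
def modr (a m : ℕ) : ℕ := if a % m = 0 then m else a % m

/-- Unbiased sample variance of the collection `{h(S) : S ∈ D}`. -/
noncomputable def sampleVar {Ω T : Type*} [MeasurableSpace T] {k : ℕ}
    (D : Finset (Finset ℕ)) (X : ℕ → Ω → T) (h : (Fin k → T) → ℝ) : Ω → ℝ :=
  fun ω => ((D.card : ℝ) - 1)⁻¹ * ∑ S ∈ D, (blockRV X h S ω - ustat D X h ω) ^ 2

section Helpers
variable {Ω : Type*} [MeasurableSpace Ω] {P : Measure Ω} [IsProbabilityMeasure P]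

omit [IsProbabilityMeasure P] in
lemma integrable_mul_of_memℒp2 {f g : Ω → ℝ} (hf : MemLp f 2 P) (hg : MemLp g 2 P) :
    Integrable (fun ω => f ω * g ω) P := by
  have h := MemLp.smul (p := 2) (q := 2) (r := 1) hg hf
    (hpqr := ⟨by simp [ENNReal.inv_two_add_inv_two]⟩)
  rw [memLp_one_iff_integrable] at h
  exact h

lemma covRV_eq_sub {f g : Ω → ℝ} (hf : MemLp f 2 P) (hg : MemLp g 2 P) :
    covRV P f g = (∫ ω, f ω * g ω ∂P) - (∫ ω, f ω ∂P) * (∫ ω, g ω ∂P) := by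
  have hfi : Integrable f P := hf.integrable one_le_two
  have hgi : Integrable g P := hg.integrable one_le_two
  have hfg : Integrable (fun ω => f ω * g ω) P := integrable_mul_of_memℒp2 hf hg
  set a := ∫ ω, f ω ∂P with ha
  set b := ∫ ω, g ω ∂P with hb
  have key : ∀ ω, (f ω - a) * (g ω - b) = f ω * g ω - (b * f ω + (a * g ω - a * b)) :=
    fun ω => by ring
  unfold covRV
  rw [← ha, ← hb]
  simp_rw [key]
  have i1 : Integrable (fun ω => a * g ω - a * b) P := by
    exact (hgi.const_mul a).sub (integrable_const _)
  have i2 : Integrable (fun ω => b * f ω + (a * g ω - a * b)) P := by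
    exact (hfi.const_mul b).add i1
  rw [integral_sub hfg i2, integral_add (hfi.const_mul b) i1,
    integral_sub (hgi.const_mul a) (integrable_const _),
    integral_const_mul, integral_const_mul, integral_const]
  simp only [probReal_univ, one_smul]
  ring

omit [IsProbabilityMeasure P] in
lemma covRV_self_nonneg (f : Ω → ℝ) : 0 ≤ covRV P f f := by
  unfold covRV
  exact integral_nonneg fun ω => mul_self_nonneg _

lemma variance_sum_eq {ι : Type*} (s : Finset ι) (f : ι → Ω → ℝ)
    (hf : ∀ i ∈ s, MemLp (f i) 2 P) :
    variance (fun ω => ∑ i ∈ s, f i ω) P = ∑ i ∈ s, ∑ j ∈ s, covRV P (f i) (f j) := by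
  have hsum : MemLp (fun ω => ∑ i ∈ s, f i ω) 2 P := by
    have heq : (fun ω => ∑ i ∈ s, f i ω) = ∑ i ∈ s, f i := by
      funext ω; simp
    rw [heq]
    exact memLp_finset_sum' s hf
  rw [variance_eq_sub hsum]
  have h2 : (P[(fun ω => ∑ i ∈ s, f i ω) ^ 2])
      = ∑ i ∈ s, ∑ j ∈ s, ∫ ω, f i ω * f j ω ∂P := by
    have he : ∀ ω, ((fun ω => ∑ i ∈ s, f i ω) ^ 2) ω
        = ∑ i ∈ s, ∑ j ∈ s, f i ω * f j ω := by
      intro ω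
      simp only [Pi.pow_apply]
      rw [sq, Finset.sum_mul_sum]
    simp_rw [he]
    rw [integral_finset_sum _ (fun i hi => integrable_finset_sum _
      (fun j hj => integrable_mul_of_memℒp2 (hf i hi) (hf j hj)))]
    exact Finset.sum_congr rfl fun i hi => integral_finset_sum _
      (fun j hj => integrable_mul_of_memℒp2 (hf i hi) (hf j hj))
  have h3 : (P[fun ω => ∑ i ∈ s, f i ω]) = ∑ i ∈ s, ∫ ω, f i ω ∂P :=
    integral_finset_sum _ (fun i hi => (hf i hi).integrable one_le_two)
  rw [h2, h3, sq, Finset.sum_mul_sum, ← Finset.sum_sub_distrib]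
  refine Finset.sum_congr rfl fun i hi => ?_
  rw [← Finset.sum_sub_distrib]
  exact Finset.sum_congr rfl fun j hj => (covRV_eq_sub (hf i hi) (hf j hj)).symm

end Helpers

section Counting

lemma degree_eq_sum (D : Finset (Finset ℕ)) (v : ℕ) :
    degree D v = ∑ S ∈ D, if v ∈ S then 1 else 0 := by
  rw [degree, Finset.card_filter]

lemma sum_degree (n : ℕ) (D : Finset (Finset ℕ))
    (hD : ∀ S ∈ D, S.card = 2 ∧ S ⊆ Finset.Icc 1 n) :
    ∑ v ∈ Finset.Icc 1 n, degree D v = 2 * D.card := by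
  simp_rw [degree_eq_sum]
  rw [Finset.sum_comm]
  have : ∀ S ∈ D, (∑ v ∈ Finset.Icc 1 n, if v ∈ S then 1 else 0) = 2 := by
    intro S hS
    rw [← Finset.card_filter, Finset.filter_mem_eq_inter,
      Finset.inter_eq_right.mpr (hD S hS).2, (hD S hS).1]
  rw [Finset.sum_congr rfl this, Finset.sum_const, smul_eq_mul, mul_comm]

lemma sum_inter_card (n : ℕ) (D : Finset (Finset ℕ))
    (hD : ∀ S ∈ D, S.card = 2 ∧ S ⊆ Finset.Icc 1 n) :
    ∑ S ∈ D, ∑ S' ∈ D, (S ∩ S').card = ∑ v ∈ Finset.Icc 1 n, (degree D v) ^ 2 := by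
  have hc : ∀ S ∈ D, ∀ S' ∈ D, (S ∩ S').card
      = ∑ v ∈ Finset.Icc 1 n,
          (if v ∈ S then 1 else 0) * (if v ∈ S' then 1 else 0) := by
    intro S hS S' hS'
    have hsub : S ∩ S' ⊆ Finset.Icc 1 n :=
      Finset.inter_subset_left.trans (hD S hS).2
    conv_lhs => rw [← Finset.inter_eq_right.mpr hsub, ← Finset.filter_mem_eq_inter,
      Finset.card_filter]
    refine Finset.sum_congr rfl fun v hv => ?_
    by_cases h1 : v ∈ S <;> by_cases h2 : v ∈ S' <;>
      simp [Finset.mem_inter, h1, h2]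
  have hdeg : ∀ v, (degree D v) ^ 2
      = ∑ S ∈ D, ∑ S' ∈ D, (if v ∈ S then 1 else 0) * (if v ∈ S' then 1 else 0) := by
    intro v
    rw [degree_eq_sum, sq, Finset.sum_mul_sum]
  calc ∑ S ∈ D, ∑ S' ∈ D, (S ∩ S').card
      = ∑ S ∈ D, ∑ S' ∈ D, ∑ v ∈ Finset.Icc 1 n,
          (if v ∈ S then 1 else 0) * (if v ∈ S' then 1 else 0) :=
        Finset.sum_congr rfl fun S hS => Finset.sum_congr rfl fun S' hS' => hc S hS S' hS'
    _ = ∑ S ∈ D, ∑ v ∈ Finset.Icc 1 n, ∑ S' ∈ D,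
          (if v ∈ S then 1 else 0) * (if v ∈ S' then 1 else 0) :=
        Finset.sum_congr rfl fun S _ => Finset.sum_comm
    _ = ∑ v ∈ Finset.Icc 1 n, ∑ S ∈ D, ∑ S' ∈ D,
          (if v ∈ S then 1 else 0) * (if v ∈ S' then 1 else 0) := Finset.sum_comm
    _ = ∑ v ∈ Finset.Icc 1 n, (degree D v) ^ 2 := by
        exact Finset.sum_congr rfl fun v _ => (hdeg v).symm

lemma inter_card_le_one {S S' : Finset ℕ} (h2 : S.card = 2) (h2' : S'.card = 2)
    (hne : S ≠ S') : (S ∩ S').card ≤ 1 := by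
  by_contra hgt
  push_neg at hgt
  have hle : (S ∩ S').card ≤ 2 := by
    rw [← h2]; exact Finset.card_le_card Finset.inter_subset_left
  have hcard : (S ∩ S').card = 2 := le_antisymm hle hgt
  have h1 : S ∩ S' = S :=
    Finset.eq_of_subset_of_card_le Finset.inter_subset_left (by omega)
  have h2'' : S ∩ S' = S' :=
    Finset.eq_of_subset_of_card_le Finset.inter_subset_right (by omega)
  exact hne (h1 ▸ h2'')

end Counting

section KeyVar
variable {Ω : Type*} [MeasurableSpace Ω] {P : Measure Ω} [IsProbabilityMeasure P]

/-- The master variance formula for an arbitrary second-order design. -/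
lemma key_var (f : Finset ℕ → Ω → ℝ) (n : ℕ) (σsq : ℕ → ℝ) (hσ0 : σsq 0 = 0)
    (D : Finset (Finset ℕ)) (hD : ∀ S ∈ D, S.card = 2 ∧ S ⊆ Finset.Icc 1 n)
    (hL2 : ∀ S ∈ D, MemLp (f S) 2 P)
    (hcov : ∀ S₁ ∈ D, ∀ S₂ ∈ D, covRV P (f S₁) (f S₂) = σsq (S₁ ∩ S₂).card) :
    variance (fun ω => (D.card : ℝ)⁻¹ * ∑ S ∈ D, f S ω) P
      = ((D.card : ℝ)⁻¹) ^ 2 * ((D.card : ℝ) * σsq 2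
          + ((∑ v ∈ Finset.Icc 1 n, ((degree D v : ℝ)) ^ 2) - 2 * D.card) * σsq 1) := by
  classical
  rw [variance_const_mul, variance_sum_eq D f hL2]
  congr 1
  have step : ∀ S ∈ D, ∀ S' ∈ D.erase S,
      σsq ((S ∩ S').card) = ((S ∩ S').card : ℝ) * σsq 1 := by
    intro S hS S' hS'
    have hne : S' ≠ S := Finset.ne_of_mem_erase hS'
    have hS'D : S' ∈ D := Finset.mem_of_mem_erase hS'
    have hle := inter_card_le_one (hD S hS).1 (hD S' hS'D).1 (Ne.symm hne)
    interval_cases h : (S ∩ S').card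
    · simp [hσ0]
    · simp
  have hdiagσ : ∀ S ∈ D, σsq ((S ∩ S).card) = σsq 2 := by
    intro S hS
    rw [Finset.inter_self, (hD S hS).1]
  have main : ∑ S ∈ D, ∑ S' ∈ D, covRV P (f S) (f S')
      = ∑ S ∈ D, (σsq 2 + ∑ S' ∈ D.erase S, ((S ∩ S').card : ℝ) * σsq 1) := by
    refine Finset.sum_congr rfl fun S hS => ?_
    rw [← Finset.add_sum_erase D _ hS, hcov S hS S hS, hdiagσ S hS]
    congr 1
    refine Finset.sum_congr rfl fun S' hS' => ?_
    rw [hcov S hS S' (Finset.mem_of_mem_erase hS'), step S hS S' hS']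
  rw [main, Finset.sum_add_distrib, Finset.sum_const, nsmul_eq_mul]
  have hoff : ∑ S ∈ D, ∑ S' ∈ D.erase S, ((S ∩ S').card : ℝ) * σsq 1
      = ((∑ v ∈ Finset.Icc 1 n, ((degree D v : ℝ)) ^ 2) - 2 * D.card) * σsq 1 := by
    have h1 : ∀ S ∈ D, ∑ S' ∈ D.erase S, ((S ∩ S').card : ℝ)
        = (∑ S' ∈ D, ((S ∩ S').card : ℝ)) - 2 := by
      intro S hS
      have := Finset.add_sum_erase D (fun S' => ((S ∩ S').card : ℝ)) hS
      have hdiag : ((S ∩ S).card : ℝ) = 2 := by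
        rw [Finset.inter_self, (hD S hS).1]; norm_num
      linarith [this, hdiag]
    have h2 : ∑ S ∈ D, ∑ S' ∈ D, ((S ∩ S').card : ℝ)
        = ∑ v ∈ Finset.Icc 1 n, ((degree D v : ℝ)) ^ 2 := by
      have := sum_inter_card n D hD
      have := congrArg (Nat.cast : ℕ → ℝ) this
      push_cast at this
      convert this using 2
    calc ∑ S ∈ D, ∑ S' ∈ D.erase S, ((S ∩ S').card : ℝ) * σsq 1
        = (∑ S ∈ D, ∑ S' ∈ D.erase S, ((S ∩ S').card : ℝ)) * σsq 1 := by
          rw [Finset.sum_mul]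
          exact Finset.sum_congr rfl fun S _ => by rw [Finset.sum_mul]
      _ = ((∑ v ∈ Finset.Icc 1 n, ((degree D v : ℝ)) ^ 2) - 2 * D.card) * σsq 1 := by
          congr 1
          rw [Finset.sum_congr rfl h1, Finset.sum_sub_distrib, h2, Finset.sum_const,
            nsmul_eq_mul]
          ring
  rw [hoff]

end KeyVar



section Prob
variable {Ω T : Type*} [MeasurableSpace Ω] {mT : MeasurableSpace T}
  {P : Measure Ω} [IsProbabilityMeasure P]

lemma sort_pair {a b : ℕ} (hab : a < b) :
    ({a, b} : Finset ℕ).sort (· ≤ ·) = [a, b] := by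
  have h1 := Finset.sort_insert (r := (· ≤ ·)) (a := a) (s := ({b} : Finset ℕ))
    (by simp [hab.le]) (by simp [hab.ne])
  rw [Finset.sort_singleton] at h1
  exact h1

lemma blockRV_pair (X : ℕ → Ω → T) (h : (Fin 2 → T) → ℝ) {a b : ℕ} (hab : a < b) :
    blockRV X h {a, b} = fun ω => h (fun j => if (j : ℕ) = 0 then X a ω else X b ω) := by
  funext ω
  unfold blockRV
  rw [sort_pair hab]
  congr 1
  funext j
  fin_cases j <;> rfl

lemma card_pair' {a b : ℕ} (hab : a ≠ b) : ({a, b} : Finset ℕ).card = 2 :=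
  Finset.card_pair hab

lemma sigma0_eq_zero (X : ℕ → Ω → T) (hXmeas : ∀ i, Measurable (X i))
    (hXindep : iIndepFun X P)
    (h : (Fin 2 → T) → ℝ) (hhmeas : Measurable h)
    (σsq : ℕ → ℝ)
    (hL2 : ∀ S : Finset ℕ, S.card = 2 → MemLp (blockRV X h S) 2 P)
    (hcov : ∀ S₁ S₂ : Finset ℕ, S₁.card = 2 → S₂.card = 2 →
      covRV P (blockRV X h S₁) (blockRV X h S₂) = σsq (S₁ ∩ S₂).card) :
    σsq 0 = 0 := by
  have hpair := hXindep.indepFun_prodMk_prodMk hXmeas 0 1 2 3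
    (by norm_num) (by norm_num) (by norm_num) (by norm_num)
  set φ : T × T → ℝ := fun p => h (fun j => if (j : ℕ) = 0 then p.1 else p.2) with hφdef
  have hφ : Measurable φ := by
    refine hhmeas.comp (measurable_pi_lambda _ fun j => ?_)
    by_cases hj : (j : ℕ) = 0
    · simp only [hj, if_pos]; exact measurable_fst
    · simp only [hj, if_neg, if_false]; exact measurable_snd
  have hind : IndepFun (blockRV X h {0, 1}) (blockRV X h {2, 3}) P := by
    rw [blockRV_pair X h (by norm_num : (0:ℕ) < 1),
      blockRV_pair X h (by norm_num : (2:ℕ) < 3)]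
    exact hpair.comp hφ hφ
  have c1 : ({0, 1} : Finset ℕ).card = 2 := card_pair' (by norm_num)
  have c2 : ({2, 3} : Finset ℕ).card = 2 := card_pair' (by norm_num)
  have l1 := hL2 _ c1
  have l2 := hL2 _ c2
  have hzero : covRV P (blockRV X h {0, 1}) (blockRV X h {2, 3}) = 0 := by
    rw [covRV_eq_sub l1 l2]
    have := hind.integral_fun_mul_eq_mul_integral l1.1
      l2.1
    exact sub_eq_zero.mpr this
  have hi : (({0, 1} : Finset ℕ) ∩ {2, 3}).card = 0 := by decide
  have := hcov {0, 1} {2, 3} c1 c2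
  rw [hzero, hi] at this
  exact this.symm

lemma sigma1_nonneg (X : ℕ → Ω → T) (h : (Fin 2 → T) → ℝ)
    (σsq : ℕ → ℝ)
    (hL2 : ∀ S : Finset ℕ, S.card = 2 → MemLp (blockRV X h S) 2 P)
    (hcov : ∀ S₁ S₂ : Finset ℕ, S₁.card = 2 → S₂.card = 2 →
      covRV P (blockRV X h S₁) (blockRV X h S₂) = σsq (S₁ ∩ S₂).card) :
    0 ≤ σsq 1 := by
  by_contra hneg
  push_neg at hneg
  have c01 : ({0, 1} : Finset ℕ).card = 2 := card_pair' (by norm_num)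
  have hσ2 : 0 ≤ σsq 2 := by
    have hc := hcov {0, 1} {0, 1} c01 c01
    rw [Finset.inter_self, c01] at hc
    rw [← hc]
    exact covRV_self_nonneg _
  obtain ⟨m, hm⟩ := exists_nat_gt (σsq 2 / (-σsq 1) + 1)
  have hm1 : 1 ≤ m := by
    have h0 : (0:ℝ) ≤ σsq 2 / (-σsq 1) := div_nonneg hσ2 (by linarith)
    have h1 : (1:ℝ) < m := by linarith
    exact_mod_cast h1.le
  set B : ℕ → Finset ℕ := fun i => {0, i + 1} with hB
  have hBcard : ∀ i, (B i).card = 2 := fun i => card_pair' (by omega)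
  have hvar := variance_sum_eq (P := P) (Finset.range m) (fun i => blockRV X h (B i))
    (fun i _ => hL2 _ (hBcard i))
  have hval : ∑ i ∈ Finset.range m, ∑ j ∈ Finset.range m,
      covRV P (blockRV X h (B i)) (blockRV X h (B j))
      = (m : ℝ) * σsq 2 + ((m : ℝ) * ((m : ℝ) - 1)) * σsq 1 := by
    have hrow : ∀ i ∈ Finset.range m,
        (∑ j ∈ Finset.range m, covRV P (blockRV X h (B i)) (blockRV X h (B j)))
          = σsq 2 + ((m - 1 : ℕ) : ℝ) * σsq 1 := by
      intro i hi
      rw [← Finset.add_sum_erase _ _ hi]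
      congr 1
      · rw [hcov _ _ (hBcard i) (hBcard i), Finset.inter_self, hBcard i]
      · have hoff : ∀ j ∈ (Finset.range m).erase i,
            covRV P (blockRV X h (B i)) (blockRV X h (B j)) = σsq 1 := by
          intro j hj
          have hij : j ≠ i := Finset.ne_of_mem_erase hj
          have hinter : B i ∩ B j = {0} := by
            ext x
            simp only [hB, Finset.mem_inter, Finset.mem_insert, Finset.mem_singleton]
            omega
          rw [hcov _ _ (hBcard i) (hBcard j), hinter, Finset.card_singleton]
        rw [Finset.sum_congr rfl hoff, Finset.sum_const,
          Finset.card_erase_of_mem hi, Finset.card_range, nsmul_eq_mul]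
    rw [Finset.sum_congr rfl hrow, Finset.sum_const, Finset.card_range, nsmul_eq_mul,
      Nat.cast_sub hm1]
    push_cast
    ring
  have hvar' : variance (fun ω => ∑ i ∈ Finset.range m, blockRV X h (B i) ω) P
      = ∑ i ∈ Finset.range m, ∑ j ∈ Finset.range m,
          covRV P (blockRV X h (B i)) (blockRV X h (B j)) := hvar
  have h0 : (0:ℝ) ≤ (m : ℝ) * σsq 2 + ((m : ℝ) * ((m : ℝ) - 1)) * σsq 1 := by
    rw [← hval, ← hvar']
    exact variance_nonneg _ _
  have hmr : σsq 2 / (-σsq 1) + 1 < (m : ℝ) := hm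
  have hpos : (0:ℝ) < -σsq 1 := by linarith
  have hd : σsq 2 < ((m : ℝ) - 1) * (-σsq 1) := by
    have h2 : σsq 2 / (-σsq 1) < (m : ℝ) - 1 := by linarith
    calc σsq 2 = σsq 2 / (-σsq 1) * (-σsq 1) := by
          rw [div_mul_cancel₀]
          exact hpos.ne'
      _ < ((m : ℝ) - 1) * (-σsq 1) := mul_lt_mul_of_pos_right h2 hpos
  have hmpos : (0:ℝ) < (m : ℝ) := by
    have : (1:ℕ) ≤ m := hm1
    exact_mod_cast Nat.lt_of_lt_of_le Nat.zero_lt_one hm1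
  nlinarith [h0, hd, hmpos]

end Prob

/-- For `k = 2` and an `r`-equireplicate design `D`, the incomplete
U-statistic has variance `|D|⁻¹ (2(r−1)σ₁² + σ₂²)`, which is minimal among all incomplete
U-statistics of second order with the same design size. -/
theorem variance_equireplicate_k2_min {Ω T : Type*} [MeasurableSpace Ω] {mT : MeasurableSpace T}
    (P : Measure Ω) [IsProbabilityMeasure P]
    (X : ℕ → Ω → T) (hXmeas : ∀ i, Measurable (X i))
    (hXindep : iIndepFun X P)
    (hXident : ∀ i j, IdentDistrib (X i) (X j) P P)
    (n r : ℕ) (h : (Fin 2 → T) → ℝ) (hhmeas : Measurable h)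
    (hhsymm : ∀ (e : Equiv.Perm (Fin 2)) (x : Fin 2 → T), h (x ∘ e) = h x)
    (D : Finset (Finset ℕ)) (hDne : D.Nonempty)
    (hD : ∀ S ∈ D, S.card = 2 ∧ S ⊆ Finset.Icc 1 n)
    (hequi : ∀ v ∈ Finset.Icc 1 n, degree D v = r)
    (σsq : ℕ → ℝ)
    (hL2 : ∀ S : Finset ℕ, S.card = 2 → MemLp (blockRV X h S) 2 P)
    (hcov : ∀ S₁ S₂ : Finset ℕ, S₁.card = 2 → S₂.card = 2 →
      covRV P (blockRV X h S₁) (blockRV X h S₂) = σsq (S₁ ∩ S₂).card) :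
    variance (ustat D X h) P
        = (D.card : ℝ)⁻¹ * (2 * ((r : ℝ) - 1) * σsq 1 + σsq 2) ∧
    ∀ D' : Finset (Finset ℕ), (∀ S ∈ D', S.card = 2 ∧ S ⊆ Finset.Icc 1 n) →
      D'.card = D.card →
      variance (ustat D X h) P ≤ variance (ustat D' X h) P := by
  classical
  have hm0 : 0 < D.card := Finset.card_pos.mpr hDne
  have hσ0 : σsq 0 = 0 := sigma0_eq_zero X hXmeas hXindep h hhmeas σsq hL2 hcov
  have hσ1 : 0 ≤ σsq 1 := sigma1_nonneg X h σsq hL2 hcov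
  have hL2' : ∀ S ∈ D, MemLp (blockRV X h S) 2 P := fun S hS => hL2 S (hD S hS).1
  have hcov' : ∀ S₁ ∈ D, ∀ S₂ ∈ D,
      covRV P (blockRV X h S₁) (blockRV X h S₂) = σsq (S₁ ∩ S₂).card :=
    fun S₁ h₁ S₂ h₂ => hcov S₁ S₂ (hD S₁ h₁).1 (hD S₂ h₂).1
  have hvarD : variance (ustat D X h) P
      = ((D.card : ℝ)⁻¹) ^ 2 * ((D.card : ℝ) * σsq 2
          + ((∑ v ∈ Finset.Icc 1 n, ((degree D v : ℝ)) ^ 2) - 2 * D.card) * σsq 1) :=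
    key_var (blockRV X h) n σsq hσ0 D hD hL2' hcov'
  obtain ⟨S₀, hS₀⟩ := hDne
  have hn : 1 ≤ n := by
    by_contra hcon
    have hn0 : n = 0 := by omega
    subst hn0
    have hsub := (hD S₀ hS₀).2
    rw [Finset.Icc_eq_empty (by omega)] at hsub
    have he : S₀ = ∅ := Finset.subset_empty.mp hsub
    have hc := (hD S₀ hS₀).1
    rw [he] at hc
    simp at hc
  have hsumdegD : ∑ v ∈ Finset.Icc 1 n, degree D v = n * r := by
    rw [Finset.sum_congr rfl hequi, Finset.sum_const, smul_eq_mul, Nat.card_Icc]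
    simp
  have hnr : n * r = 2 * D.card := by rw [← hsumdegD]; exact sum_degree n D hD
  have hnr' : (n : ℝ) * (r : ℝ) = 2 * (D.card : ℝ) := by exact_mod_cast hnr
  have hsumdeg2 : ∑ v ∈ Finset.Icc 1 n, ((degree D v : ℝ)) ^ 2 = (n : ℝ) * (r : ℝ) ^ 2 := by
    rw [Finset.sum_congr rfl (fun v hv => by rw [hequi v hv]), Finset.sum_const,
      nsmul_eq_mul, Nat.card_Icc]
    push_cast [Nat.add_sub_cancel]
    ring
  have hmne : (D.card : ℝ) ≠ 0 := Nat.cast_ne_zero.mpr hm0.ne'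
  constructor
  · rw [hvarD, hsumdeg2]
    have hnr2 : (n : ℝ) * (r : ℝ) ^ 2 = 2 * (D.card : ℝ) * (r : ℝ) := by
      rw [sq, ← mul_assoc, hnr']
    rw [hnr2]
    field_simp
    ring
  · intro D' hD' hcard
    have hvarD' : variance (ustat D' X h) P
        = ((D'.card : ℝ)⁻¹) ^ 2 * ((D'.card : ℝ) * σsq 2
            + ((∑ v ∈ Finset.Icc 1 n, ((degree D' v : ℝ)) ^ 2) - 2 * D'.card) * σsq 1) :=
      key_var (blockRV X h) n σsq hσ0 D' hD'
        (fun S hS => hL2 S (hD' S hS).1)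
        (fun S₁ h₁ S₂ h₂ => hcov S₁ S₂ (hD' S₁ h₁).1 (hD' S₂ h₂).1)
    rw [hvarD, hvarD', hcard, hsumdeg2]
    have hsum' : ∑ v ∈ Finset.Icc 1 n, ((degree D' v : ℝ)) = 2 * (D.card : ℝ) := by
      have h1 := sum_degree n D' hD'
      rw [hcard] at h1
      exact_mod_cast h1
    have hcs := sq_sum_le_card_mul_sum_sq (s := Finset.Icc 1 n)
      (f := fun v => ((degree D' v : ℝ)))
    have hnpos : (0 : ℝ) < n := by exact_mod_cast hn
    have hSig : (n : ℝ) * (r : ℝ) ^ 2 ≤ ∑ v ∈ Finset.Icc 1 n, ((degree D' v : ℝ)) ^ 2 := by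
      have key : (n : ℝ) * ((n : ℝ) * (r : ℝ) ^ 2)
          ≤ (n : ℝ) * ∑ v ∈ Finset.Icc 1 n, ((degree D' v : ℝ)) ^ 2 := by
        calc (n : ℝ) * ((n : ℝ) * (r : ℝ) ^ 2) = ((n : ℝ) * (r : ℝ)) ^ 2 := by ring
          _ = (2 * (D.card : ℝ)) ^ 2 := by rw [hnr']
          _ = (∑ v ∈ Finset.Icc 1 n, ((degree D' v : ℝ))) ^ 2 := by rw [hsum']
          _ ≤ ((Finset.Icc 1 n).card : ℝ)
              * ∑ v ∈ Finset.Icc 1 n, ((degree D' v : ℝ)) ^ 2 := hcs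
          _ = (n : ℝ) * ∑ v ∈ Finset.Icc 1 n, ((degree D' v : ℝ)) ^ 2 := by
              rw [Nat.card_Icc]
              norm_num
      exact le_of_mul_le_mul_left key hnpos
    refine mul_le_mul_of_nonneg_left ?_ (by positivity)
    apply add_le_add_right
    exact mul_le_mul_of_nonneg_right (sub_le_sub_right hSig _) hσ1



end IUStat
end

section
/- Let D be a non-equireplicate deterministic design of order k on V = {1,…,n} and let D† be an r-equireplicate design of order k on V. (i) If r < (Δ(D) − 1)/k + 1, then Δ(L(D†)) < Δ(L(D)). (ii) If moreover k = 2 and |D| = |D†|, then Δ(L(D†)) < Δ(L(D)) holds without any condition on r. -/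
open MeasureTheory ProbabilityTheory Filter Finset

namespace IUStat

lemma double_count (n : ℕ) (D : Finset (Finset ℕ)) (hD : ∀ S ∈ D, S ⊆ Finset.Icc 1 n)
    (f : ℕ → ℤ) :
    ∑ S ∈ D, ∑ v ∈ S, f v = ∑ v ∈ Finset.Icc 1 n, (degree D v : ℤ) * f v := by
  have h1 : ∀ S ∈ D, ∑ v ∈ S, f v = ∑ v ∈ Finset.Icc 1 n, if v ∈ S then f v else 0 := by
    intro S hS
    rw [← Finset.sum_filter]
    congr 1
    ext v
    simp only [Finset.mem_filter]
    exact ⟨fun h => ⟨hD S hS h, h⟩, fun h => h.2⟩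
  rw [Finset.sum_congr rfl h1, Finset.sum_comm]
  refine Finset.sum_congr rfl fun v _ => ?_
  rw [Finset.sum_ite, Finset.sum_const_zero, add_zero, Finset.sum_const, degree]
  simp [mul_comm]

lemma lineDegree_le (Dd : Finset (Finset ℕ)) (S : Finset ℕ) (hS : S ∈ Dd) :
    lineDegree Dd S ≤ 1 + ∑ v ∈ S, (degree Dd v - 1) := by
  have hsub : Dd.filter (fun S' => (S ∩ S').Nonempty) ⊆
      insert S (S.biUnion fun v => ((Dd.filter fun S' => v ∈ S').erase S)) := by
    intro S' hS'
    simp only [Finset.mem_filter] at hS'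
    obtain ⟨w, hw⟩ := hS'.2
    simp only [Finset.mem_inter] at hw
    by_cases h : S' = S
    · subst h; exact Finset.mem_insert_self _ _
    · refine Finset.mem_insert_of_mem (Finset.mem_biUnion.2 ⟨w, hw.1, ?_⟩)
      exact Finset.mem_erase.2 ⟨h, Finset.mem_filter.2 ⟨hS'.1, hw.2⟩⟩
  calc lineDegree Dd S ≤ _ := Finset.card_le_card hsub
    _ ≤ (S.biUnion fun v => (Dd.filter fun S' => v ∈ S').erase S).card + 1 :=
        Finset.card_insert_le _ _
    _ ≤ (∑ v ∈ S, ((Dd.filter fun S' => v ∈ S').erase S).card) + 1 :=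
        Nat.add_le_add_right (Finset.card_biUnion_le) 1
    _ = 1 + ∑ v ∈ S, (degree Dd v - 1) := by
        rw [add_comm]
        congr 1
        refine Finset.sum_congr rfl fun v hv => ?_
        rw [Finset.card_erase_of_mem (Finset.mem_filter.2 ⟨hS, hv⟩), degree]

lemma degree_le_lineDegree (D : Finset (Finset ℕ)) (S : Finset ℕ) (v : ℕ) (hv : v ∈ S) :
    degree D v ≤ lineDegree D S :=
  Finset.card_le_card fun S' h => by
    simp only [Finset.mem_filter] at h ⊢
    exact ⟨h.1, ⟨v, Finset.mem_inter.2 ⟨hv, h.2⟩⟩⟩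

/-- Comparison of the maximum degree of the dependency (line) graph:
(i) if `r < (Δ(D) − 1)/k + 1` then `Δ(L(D†)) < Δ(L(D))`; (ii) if moreover `k = 2` and
`|D| = |D†|` then `Δ(L(D†)) < Δ(L(D))` with no condition on `r`. -/
theorem maxLineDegree_equireplicate_lt (n k r : ℕ)
    (D Dd : Finset (Finset ℕ))
    (hD : ∀ S ∈ D, S.card = k ∧ S ⊆ Finset.Icc 1 n)
    (hDnonequi : ¬ ∃ r', ∀ v ∈ Finset.Icc 1 n, degree D v = r')
    (hDd : ∀ S ∈ Dd, S.card = k ∧ S ⊆ Finset.Icc 1 n)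
    (hequi : ∀ v ∈ Finset.Icc 1 n, degree Dd v = r) :
    ((r : ℝ) < ((maxDegree n D : ℝ) - 1) / (k : ℝ) + 1 →
      maxLineDegree Dd < maxLineDegree D) ∧
    (k = 2 → D.card = Dd.card → maxLineDegree Dd < maxLineDegree D) := by
  push_neg at hDnonequi
  -- k ≥ 1
  have hk1 : 1 ≤ k := by
    by_contra hk
    have hk0 : k = 0 := by omega
    obtain ⟨v, hv, hne⟩ := hDnonequi 0
    refine hne ?_
    rw [degree, Finset.card_eq_zero, Finset.filter_eq_empty_iff]
    intro S hS
    have : S = ∅ := Finset.card_eq_zero.1 (by rw [(hD S hS).1, hk0])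
    simp [this]
  -- max degree is attained and is at least 1
  obtain ⟨v₁, hv₁I, hv₁⟩ := hDnonequi 0
  have hIcc : (Finset.Icc 1 n).Nonempty := ⟨v₁, hv₁I⟩
  have hΔ1 : 1 ≤ maxDegree n D :=
    le_trans (by omega) (Finset.le_sup (f := degree D) hv₁I)
  obtain ⟨vm, hvmI, hvm⟩ := Finset.exists_mem_eq_sup _ hIcc (degree D)
  have hvm1 : 1 ≤ degree D vm := by rw [← hvm]; exact hΔ1
  obtain ⟨S₀, hS₀⟩ := Finset.card_pos.1 hvm1
  simp only [Finset.mem_filter] at hS₀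
  have hlow : maxDegree n D ≤ maxLineDegree D :=
    le_trans (le_trans (le_of_eq hvm) (degree_le_lineDegree D S₀ vm hS₀.2))
      (Finset.le_sup hS₀.1)
  -- if r = 0 then Dd is empty
  have hDdEmpty : r = 0 → Dd = ∅ := by
    intro hr0
    refine Finset.eq_empty_of_forall_notMem fun S hS => ?_
    have hc : 1 ≤ S.card := by rw [(hDd S hS).1]; exact hk1
    obtain ⟨v, hv⟩ := Finset.card_pos.1 hc
    have hvI : v ∈ Finset.Icc 1 n := (hDd S hS).2 hv
    have : 1 ≤ degree Dd v := Finset.card_pos.2 ⟨S, Finset.mem_filter.2 ⟨hS, hv⟩⟩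
    rw [hequi v hvI, hr0] at this
    omega
  -- upper bound for maxLineDegree Dd
  have hupper : maxLineDegree Dd ≤ 1 + k * (r - 1) := by
    refine Finset.sup_le fun S hS => ?_
    refine le_trans (lineDegree_le Dd S hS) ?_
    have : ∑ v ∈ S, (degree Dd v - 1) = ∑ _v ∈ S, (r - 1) :=
      Finset.sum_congr rfl fun v hv => by rw [hequi v ((hDd S hS).2 hv)]
    rw [this, Finset.sum_const, (hDd S hS).1, smul_eq_mul]
  constructor
  · -- part (i)
    intro hr
    rcases Nat.eq_zero_or_pos r with hr0 | hr1
    · have : maxLineDegree Dd = 0 := by rw [hDdEmpty hr0]; rfl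
      omega
    · -- arithmetic: k*(r-1)+1 < maxDegree n D
      have hk0 : (0:ℝ) < (k:ℝ) := by exact_mod_cast hk1
      have h1 : ((r:ℝ) - 1) * k < (maxDegree n D : ℝ) - 1 := by
        rw [← lt_div_iff₀ hk0]
        linarith
      have hcast : ((k * (r - 1) + 1 : ℕ) : ℝ) = (k:ℝ) * ((r:ℝ) - 1) + 1 := by
        rw [Nat.cast_add, Nat.cast_mul, Nat.cast_sub hr1]
        norm_num
      have h2 : (k * (r - 1) + 1 : ℕ) < maxDegree n D := by
        have : ((k * (r - 1) + 1 : ℕ) : ℝ) < (maxDegree n D : ℝ) := by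
          rw [hcast]; linarith
        exact_mod_cast this
      omega
  · -- part (ii)
    intro hk2 hcard
    subst hk2
    have hr1 : 1 ≤ r := by
      by_contra hr
      have hr0 : r = 0 := by omega
      have hDe : D = ∅ := by
        rw [← Finset.card_eq_zero, hcard, hDdEmpty hr0]; rfl
      refine hv₁ ?_
      rw [hDe]
      simp [degree]
    set I := Finset.Icc 1 n with hI
    set d : ℕ → ℤ := fun v => (degree D v : ℤ) with hd
    -- handshake for D
    have hhD : ∑ v ∈ I, d v = 2 * D.card := by
      have h := double_count n D (fun S hS => (hD S hS).2) (fun _ => 1)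
      simp only [mul_one] at h
      rw [← h]
      rw [Finset.sum_congr rfl (fun S hS => by
        rw [Finset.sum_const, (hD S hS).1]; simp :
          ∀ S ∈ D, ∑ _v ∈ S, (1:ℤ) = (2:ℤ))]
      rw [Finset.sum_const, nsmul_eq_mul]
      ring
    -- handshake for Dd
    have hhDd : ∑ v ∈ I, ((degree Dd v : ℤ)) = 2 * Dd.card := by
      have h := double_count n Dd (fun S hS => (hDd S hS).2) (fun _ => 1)
      simp only [mul_one] at h
      rw [← h]
      rw [Finset.sum_congr rfl (fun S hS => by
        rw [Finset.sum_const, (hDd S hS).1]; simp :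
          ∀ S ∈ Dd, ∑ _v ∈ S, (1:ℤ) = (2:ℤ))]
      rw [Finset.sum_const, nsmul_eq_mul]
      ring
    have hs : ∑ v ∈ I, d v = ∑ v ∈ I, (r:ℤ) := by
      rw [hhD, hcard, ← hhDd]
      exact (Finset.sum_congr rfl fun v hv => by rw [hequi v hv]).symm
    -- strict inequality of sums of squares
    have hpos : 0 < ∑ v ∈ I, (d v - r)^2 := by
      obtain ⟨v₀, hv₀I, hv₀⟩ := hDnonequi r
      refine Finset.sum_pos' (fun i _ => sq_nonneg _) ⟨v₀, hv₀I, ?_⟩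
      have : d v₀ - (r:ℤ) ≠ 0 := sub_ne_zero.2 (by simp only [hd]; exact_mod_cast hv₀)
      positivity
    have expand : ∑ v ∈ I, (d v - r)^2
        = ∑ v ∈ I, (d v)^2 - ∑ v ∈ I, (2*(r:ℤ)*(d v)) + ∑ v ∈ I, (r:ℤ)^2 := by
      rw [← Finset.sum_sub_distrib, ← Finset.sum_add_distrib]
      exact Finset.sum_congr rfl fun v _ => by ring
    have hmid : ∑ v ∈ I, (2*(r:ℤ)*(d v)) = 2 * ∑ v ∈ I, (r:ℤ)^2 := by
      rw [← Finset.mul_sum, hs, Finset.mul_sum, Finset.mul_sum]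
      exact Finset.sum_congr rfl fun v _ => by ring
    have key : ∑ v ∈ I, (r:ℤ)^2 < ∑ v ∈ I, (d v)^2 := by
      rw [expand, hmid] at hpos
      linarith
    -- double count for f = d
    have dc : ∑ S ∈ D, ∑ v ∈ S, d v = ∑ v ∈ I, (d v)^2 := by
      rw [double_count n D (fun S hS => (hD S hS).2) d]
      exact Finset.sum_congr rfl fun v _ => by ring
    have h6 : (D.card:ℤ) * (2*(r:ℤ)) = ∑ v ∈ I, (r:ℤ)^2 := by
      have h7 : ∑ v ∈ I, (r:ℤ)^2 = (∑ v ∈ I, (r:ℤ)) * r := by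
        rw [Finset.sum_mul]
        exact Finset.sum_congr rfl fun v _ => by ring
      rw [h7, ← hs, hhD]
      ring
    have h5 : ∑ S ∈ D, (2*(r:ℤ)) < ∑ S ∈ D, ∑ v ∈ S, d v := by
      rw [dc, Finset.sum_const, nsmul_eq_mul, h6]
      exact key
    obtain ⟨S, hSD, hSlt⟩ := Finset.exists_lt_of_sum_lt h5
    obtain ⟨u, w, huw, hSuw⟩ := Finset.card_eq_two.1 (hD S hSD).1
    have hsumS : ∑ v ∈ S, d v = d u + d w := by rw [hSuw, Finset.sum_pair huw]
    have huwdeg : 2 * r + 1 ≤ degree D u + degree D w := by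
      rw [hsumS] at hSlt
      have : (2 * r : ℤ) < (degree D u : ℤ) + (degree D w : ℤ) := by
        push_cast at hSlt ⊢; linarith
      exact_mod_cast this
    -- lower bound on lineDegree D S
    set A := D.filter (fun S' => u ∈ S') with hA
    set B := D.filter (fun S' => w ∈ S') with hB
    have hAB : A ∪ B ⊆ D.filter (fun S' => (S ∩ S').Nonempty) := by
      intro S' hS'
      rcases Finset.mem_union.1 hS' with h | h <;>
        simp only [hA, hB, Finset.mem_filter] at h ⊢
      · exact ⟨h.1, u, Finset.mem_inter.2 ⟨by rw [hSuw]; simp, h.2⟩⟩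
      · exact ⟨h.1, w, Finset.mem_inter.2 ⟨by rw [hSuw]; simp, h.2⟩⟩
    have hint : A ∩ B ⊆ {S} := by
      intro S' hS'
      simp only [hA, hB, Finset.mem_inter, Finset.mem_filter] at hS'
      have hsub : ({u, w} : Finset ℕ) ⊆ S' := by
        intro x hx
        rcases Finset.mem_insert.1 hx with h | h
        · subst h; exact hS'.1.2
        · rw [Finset.mem_singleton.1 h]; exact hS'.2.2
      have hcard2 : S'.card ≤ ({u, w} : Finset ℕ).card := by
        rw [Finset.card_pair huw, (hD S' hS'.1.1).1]
      have := Finset.eq_of_subset_of_card_le hsub hcard2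
      rw [Finset.mem_singleton, ← this, hSuw]
    have hc1 : (A ∪ B).card + (A ∩ B).card = degree D u + degree D w :=
      Finset.card_union_add_card_inter A B
    have hc2 : (A ∩ B).card ≤ 1 := le_trans (Finset.card_le_card hint) (by simp)
    have hc3 : (A ∪ B).card ≤ lineDegree D S := Finset.card_le_card hAB
    have hfinal : 2 * r ≤ lineDegree D S := by omega
    have : lineDegree D S ≤ maxLineDegree D := Finset.le_sup hSD
    omega

end IUStat
end
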